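/- arXiv:1101.2915 — 2 statements merged into one kernel-verified Lean document; each statement's English description precedes it below -/
import Mathlib

section
/- Let α ∈ (1/√2, 1) and let f be the full-branch symmetric Lorenz map with parameter a = 2^α (so that f(0⁺) = −1/2, f(0⁻) = 1/2, f(1/2) = 1/2, f(−1/2) = −1/2 and f′(x) ≥ 2α > √2 on the domain). Then f is locally eventually onto: for every nondegenerate open interval J ⊆ (−1/2, 1/2) there exist an integer n ≥ 1 and an open subinterval J₀ ⊆ J such that 0 ∉ f^{k}(J₀) for all 0 ≤ k < n and f^{n}(J₀) equals (0, 1/2) or (−1/2, 0). -/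
/-- The symmetric Lorenz one-dimensional map with parameters `a > 0`,
`α ∈ (0,1)`: `f(x) = a·x^α − 1/2` for `x > 0` and `f(x) = −a·(−x)^α + 1/2`
for `x < 0`. -/
noncomputable def lorenzMap (a α : ℝ) (x : ℝ) : ℝ :=
  if 0 < x then a * x ^ α - 1 / 2 else -(a * (-x) ^ α) + 1 / 2

namespace LorenzAux

open Set

/-- Right branch of the Lorenz map (continuous extension to `x = 0`). -/
noncomputable def g (α x : ℝ) : ℝ := (2:ℝ) ^ α * x ^ α - 1 / 2

/-- Left branch of the Lorenz map (continuous extension to `x = 0`). -/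
noncomputable def h (α x : ℝ) : ℝ := -((2:ℝ) ^ α * (-x) ^ α) + 1 / 2

variable {α : ℝ}

lemma f_eq_g {x : ℝ} (hx : 0 < x) : lorenzMap ((2:ℝ) ^ α) α x = g α x := if_pos hx

lemma f_eq_h {x : ℝ} (hx : x ≤ 0) : lorenzMap ((2:ℝ) ^ α) α x = h α x :=
  if_neg (not_lt.2 hx)

lemma h_eq (x : ℝ) : h α x = -(g α (-x)) := by simp [g, h]; ring

lemma g_zero (hα : 0 < α) : g α 0 = -(1/2) := by
  simp [g, Real.zero_rpow hα.ne']

lemma g_half : g α (1/2) = 1/2 := by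
  have h1 : (2:ℝ) ^ α * (1/2:ℝ) ^ α = 1 := by
    rw [← Real.mul_rpow (by norm_num) (by norm_num)]
    norm_num
  simp only [g]; rw [h1]; norm_num

lemma h_zero (hα : 0 < α) : h α 0 = 1/2 := by
  simp [h, Real.zero_rpow hα.ne']

lemma h_neg_half : h α (-(1/2)) = -(1/2) := by
  rw [h_eq, neg_neg, g_half]

lemma g_lt_g (hα : 0 < α) {u v : ℝ} (hu : 0 ≤ u) (huv : u < v) : g α u < g α v := by
  have h2 : (0:ℝ) < (2:ℝ) ^ α := Real.rpow_pos_of_pos two_pos α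
  have := mul_lt_mul_of_pos_left (Real.rpow_lt_rpow hu huv hα) h2
  simpa [g] using this

lemma g_le_g (hα : 0 < α) {u v : ℝ} (hu : 0 ≤ u) (huv : u ≤ v) : g α u ≤ g α v := by
  rcases huv.lt_or_eq with hlt | rfl
  · exact (g_lt_g hα hu hlt).le
  · exact le_rfl

lemma h_lt_h (hα : 0 < α) {u v : ℝ} (hv : v ≤ 0) (huv : u < v) : h α u < h α v := by
  rw [h_eq, h_eq]
  have := g_lt_g hα (by linarith : (0:ℝ) ≤ -v) (by linarith : -v < -u)
  linarith

lemma h_le_h (hα : 0 < α) {u v : ℝ} (hv : v ≤ 0) (huv : u ≤ v) : h α u ≤ h α v := by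
  rcases huv.lt_or_eq with hlt | rfl
  · exact (h_lt_h hα hv hlt).le
  · exact le_rfl

lemma g_cont (hα : 0 < α) : Continuous (g α) := by
  have hc : Continuous fun x : ℝ => x ^ α :=
    continuous_iff_continuousAt.2 fun x =>
      Real.continuousAt_rpow_const x α (Or.inr hα.le)
  exact ((continuous_const.mul hc).sub continuous_const)

lemma h_cont (hα : 0 < α) : Continuous (h α) := by
  have : Continuous fun x : ℝ => -(g α (-x)) := ((g_cont hα).comp continuous_neg).neg
  simpa [← h_eq] using this

lemma image_Ioo_right (hα : 0 < α) {u v : ℝ} (hu : 0 ≤ u) (huv : u < v) :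
    lorenzMap ((2:ℝ) ^ α) α '' Ioo u v = Ioo (g α u) (g α v) := by
  apply Subset.antisymm
  · rintro _ ⟨x, hx, rfl⟩
    rw [f_eq_g (lt_of_le_of_lt hu hx.1)]
    exact ⟨g_lt_g hα hu hx.1, g_lt_g hα (le_trans hu hx.1.le) hx.2⟩
  · intro y hy
    obtain ⟨x, hx, hgx⟩ := intermediate_value_Ioo huv.le (g_cont hα).continuousOn hy
    exact ⟨x, hx, by rw [f_eq_g (lt_of_le_of_lt hu hx.1)]; exact hgx⟩

lemma image_Ioo_left (hα : 0 < α) {u v : ℝ} (hv : v ≤ 0) (huv : u < v) :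
    lorenzMap ((2:ℝ) ^ α) α '' Ioo u v = Ioo (h α u) (h α v) := by
  apply Subset.antisymm
  · rintro _ ⟨x, hx, rfl⟩
    rw [f_eq_h (le_trans hx.2.le hv)]
    exact ⟨h_lt_h hα (le_trans hx.2.le hv) hx.1, h_lt_h hα hv hx.2⟩
  · intro y hy
    obtain ⟨x, hx, hgx⟩ := intermediate_value_Ioo huv.le (h_cont hα).continuousOn hy
    exact ⟨x, hx, by rw [f_eq_h (le_trans hx.2.le hv)]; exact hgx⟩

/-- Bernoulli-type lower bound: `α v^(α-1) (v-u) ≤ v^α - u^α`. -/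
lemma rpow_lower (hα : 0 < α) (hα1 : α < 1) {u v : ℝ} (hu : 0 ≤ u) (huv : u < v) :
    α * v ^ (α - 1) * (v - u) ≤ v ^ α - u ^ α := by
  have hv : 0 < v := lt_of_le_of_lt hu huv
  set t := u / v with ht
  have ht0 : 0 ≤ t := div_nonneg hu hv.le
  have key : t ^ α * 1 ^ (1 - α) ≤ α * t + (1 - α) * 1 :=
    Real.geom_mean_le_arith_mean2_weighted hα.le (by linarith) ht0 zero_le_one (by ring)
  have key' : t ^ α ≤ α * t + (1 - α) := by simpa using key
  have hva : (0:ℝ) < v ^ α := Real.rpow_pos_of_pos hv α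
  have hueq : u ^ α = v ^ α * t ^ α := by
    rw [ht, Real.div_rpow hu hv.le]
    field_simp
  have hv1 : v ^ (α - 1) = v ^ α / v := by
    rw [Real.rpow_sub hv, Real.rpow_one]
  have hvt : u = v * t := by rw [ht]; field_simp
  have h1 : α * (1 - t) ≤ 1 - t ^ α := by linarith
  have h2 : v ^ α * (α * (1 - t)) ≤ v ^ α * (1 - t ^ α) :=
    mul_le_mul_of_nonneg_left h1 hva.le
  calc α * v ^ (α - 1) * (v - u) = v ^ α * (α * (1 - t)) := by
        rw [hv1, hvt]; field_simp
    _ ≤ v ^ α * (1 - t ^ α) := h2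
    _ = v ^ α - v ^ α * t ^ α := by ring
    _ = v ^ α - u ^ α := by rw [← hueq]

/-- Uniform expansion on the right branch. -/
lemma expand_right (hα : 0 < α) (hα1 : α < 1) {u v : ℝ}
    (hu : 0 ≤ u) (huv : u < v) (hv : v ≤ 1/2) :
    2 * α * (v - u) ≤ g α v - g α u := by
  have hv0 : 0 < v := lt_of_le_of_lt hu huv
  have h2 : (0:ℝ) < (2:ℝ) ^ α := Real.rpow_pos_of_pos two_pos α
  have hmono : v ^ (1 - α) ≤ (1/2:ℝ) ^ (1 - α) :=
    Real.rpow_le_rpow hv0.le hv (by linarith)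
  have hvpos : (0:ℝ) < v ^ (1 - α) := Real.rpow_pos_of_pos hv0 _
  have hhalf : ((1/2:ℝ)) ^ (1 - α) = ((2:ℝ) ^ (1 - α))⁻¹ := by
    rw [one_div, Real.inv_rpow (by norm_num)]
  have h2pos : (0:ℝ) < (2:ℝ) ^ (1 - α) := Real.rpow_pos_of_pos two_pos _
  have hinv : (2:ℝ) ^ (1 - α) ≤ (v ^ (1 - α))⁻¹ := by
    rw [hhalf] at hmono
    calc (2:ℝ) ^ (1 - α) = (((2:ℝ) ^ (1 - α))⁻¹)⁻¹ := by rw [inv_inv]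
      _ ≤ (v ^ (1 - α))⁻¹ := by
          apply inv_anti₀ hvpos hmono
  have hval : v ^ (α - 1) = (v ^ (1 - α))⁻¹ := by
    rw [← Real.rpow_neg hv0.le]; ring_nf
  have hkey : (2:ℝ) ≤ (2:ℝ) ^ α * v ^ (α - 1) := by
    have := mul_le_mul_of_nonneg_left hinv h2.le
    calc (2:ℝ) = (2:ℝ) ^ α * (2:ℝ) ^ (1 - α) := by
          rw [← Real.rpow_add two_pos]; norm_num
      _ ≤ (2:ℝ) ^ α * (v ^ (1 - α))⁻¹ := this
      _ = (2:ℝ) ^ α * v ^ (α - 1) := by rw [hval]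
  have hber := rpow_lower hα hα1 hu huv
  have hdiff : g α v - g α u = (2:ℝ) ^ α * (v ^ α - u ^ α) := by simp [g]; ring
  have step : (2:ℝ) ^ α * (α * v ^ (α - 1) * (v - u)) ≤ (2:ℝ) ^ α * (v ^ α - u ^ α) :=
    mul_le_mul_of_nonneg_left hber h2.le
  have hvu : 0 < v - u := by linarith
  nlinarith [mul_le_mul_of_nonneg_right hkey (mul_nonneg hα.le hvu.le)]

/-- Uniform expansion on the left branch. -/
lemma expand_left (hα : 0 < α) (hα1 : α < 1) {u v : ℝ}
    (hu : -(1/2) ≤ u) (huv : u < v) (hv : v ≤ 0) :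
    2 * α * (v - u) ≤ h α v - h α u := by
  rw [h_eq, h_eq]
  have := expand_right hα hα1 (by linarith : (0:ℝ) ≤ -v)
    (by linarith : -v < -u) (by linarith : -u ≤ 1/2)
  linarith

/-- The goal predicate: some open subinterval of `(u,v)` avoids `0` for `n`
steps and is mapped exactly onto `(0,1/2)` or `(-1/2,0)` at step `n ≥ 1`. -/
def Reach (α u v : ℝ) : Prop :=
  ∃ n : ℕ, 1 ≤ n ∧ ∃ c₀ d₀ : ℝ, c₀ < d₀ ∧
    Set.Ioo c₀ d₀ ⊆ Set.Ioo u v ∧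
    (∀ k < n, (0 : ℝ) ∉ (lorenzMap ((2 : ℝ) ^ α) α)^[k] '' Set.Ioo c₀ d₀) ∧
    ((lorenzMap ((2 : ℝ) ^ α) α)^[n] '' Set.Ioo c₀ d₀ = Set.Ioo (0 : ℝ) (1 / 2) ∨
     (lorenzMap ((2 : ℝ) ^ α) α)^[n] '' Set.Ioo c₀ d₀ = Set.Ioo (-(1 / 2) : ℝ) 0)

lemma reach_mono {u v u' v' : ℝ} (hu : u ≤ u') (hv : v' ≤ v) (hr : Reach α u' v') :
    Reach α u v := by
  obtain ⟨n, hn, c₀, d₀, hcd, hsub, havoid, him⟩ := hr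
  exact ⟨n, hn, c₀, d₀, hcd, hsub.trans (Ioo_subset_Ioo hu hv), havoid, him⟩

lemma exists_x0 (hα : 0 < α) : ∃ x₀ ∈ Ioo (0:ℝ) (1/2), g α x₀ = 0 := by
  have hsub := intermediate_value_Ioo (by norm_num : (0:ℝ) ≤ 1/2) (g_cont hα).continuousOn
  have h0 : (0:ℝ) ∈ Ioo (g α 0) (g α (1/2)) := by
    rw [g_zero hα, g_half]; constructor <;> norm_num
  obtain ⟨x₀, hx₀, hg⟩ := hsub h0
  exact ⟨x₀, hx₀, hg⟩

/-- Terminal case: `u < 0 < x₀ ≤ v`, map `(0,x₀)` onto `(-1/2,0)` in one step. -/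
lemma reach_pos (hα : 0 < α) {u v x₀ : ℝ} (hu : u < 0)
    (hx₀ : x₀ ∈ Ioo (0:ℝ) (1/2)) (hg : g α x₀ = 0) (hxv : x₀ ≤ v) : Reach α u v := by
  refine ⟨1, le_rfl, 0, x₀, hx₀.1, Ioo_subset_Ioo hu.le hxv, ?_, Or.inr ?_⟩
  · intro k hk
    interval_cases k
    simp
  · rw [Function.iterate_one, image_Ioo_right hα le_rfl hx₀.1, g_zero hα, hg]

/-- Terminal case: `u ≤ -x₀ < 0 < v`, map `(-x₀,0)` onto `(0,1/2)` in one step. -/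
lemma reach_neg (hα : 0 < α) {u v x₀ : ℝ} (hv : 0 < v)
    (hx₀ : x₀ ∈ Ioo (0:ℝ) (1/2)) (hg : g α x₀ = 0) (hxu : u ≤ -x₀) : Reach α u v := by
  refine ⟨1, le_rfl, -x₀, 0, by linarith [hx₀.1], Ioo_subset_Ioo hxu hv.le, ?_, Or.inl ?_⟩
  · intro k hk
    interval_cases k
    simp
  · rw [Function.iterate_one, image_Ioo_left hα le_rfl (by linarith [hx₀.1]),
      h_zero hα, h_eq, neg_neg, hg, neg_zero]

/-- Pull back reachability through the right branch. -/
lemma pull_right (hα : 0 < α) {u v : ℝ} (hu : 0 ≤ u) (huv : u < v)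
    (hr : Reach α (g α u) (g α v)) : Reach α u v := by
  obtain ⟨n, hn, c₀, d₀, hcd, hsub, havoid, him⟩ := hr
  have hbounds : g α u ≤ c₀ ∧ d₀ ≤ g α v := (Set.Ioo_subset_Ioo_iff hcd).1 hsub
  obtain ⟨c', hc'mem, hc'⟩ := intermediate_value_Icc huv.le (g_cont hα).continuousOn
    ⟨hbounds.1, le_trans hcd.le hbounds.2⟩
  obtain ⟨d', hd'mem, hd'⟩ := intermediate_value_Icc huv.le (g_cont hα).continuousOn
    ⟨le_trans hbounds.1 hcd.le, hbounds.2⟩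
  have hcd' : c' < d' := by
    by_contra hle
    push_neg at hle
    have : g α d' ≤ g α c' := g_le_g hα (le_trans hu hd'mem.1) hle
    rw [hc', hd'] at this
    exact absurd hcd (not_lt.2 this)
  have himg : lorenzMap ((2:ℝ) ^ α) α '' Ioo c' d' = Ioo c₀ d₀ := by
    rw [image_Ioo_right hα (le_trans hu hc'mem.1) hcd', hc', hd']
  refine ⟨n + 1, Nat.le_add_left 1 n, c', d', hcd',
    Ioo_subset_Ioo hc'mem.1 hd'mem.2, ?_, ?_⟩
  · intro k hk
    cases k with
    | zero =>
      simp only [Function.iterate_zero, Set.image_id]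
      rintro ⟨h0, -⟩
      exact absurd (le_trans hu hc'mem.1) (not_le.2 h0)
    | succ k =>
      rw [Function.iterate_succ, Set.image_comp, himg]
      exact havoid k (Nat.lt_of_succ_lt_succ hk)
  · rw [Function.iterate_succ, Set.image_comp, himg]
    exact him

/-- Pull back reachability through the left branch. -/
lemma pull_left (hα : 0 < α) {u v : ℝ} (hv : v ≤ 0) (huv : u < v)
    (hr : Reach α (h α u) (h α v)) : Reach α u v := by
  obtain ⟨n, hn, c₀, d₀, hcd, hsub, havoid, him⟩ := hr
  have hbounds : h α u ≤ c₀ ∧ d₀ ≤ h α v := (Set.Ioo_subset_Ioo_iff hcd).1 hsub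
  obtain ⟨c', hc'mem, hc'⟩ := intermediate_value_Icc huv.le (h_cont hα).continuousOn
    ⟨hbounds.1, le_trans hcd.le hbounds.2⟩
  obtain ⟨d', hd'mem, hd'⟩ := intermediate_value_Icc huv.le (h_cont hα).continuousOn
    ⟨le_trans hbounds.1 hcd.le, hbounds.2⟩
  have hcd' : c' < d' := by
    by_contra hle
    push_neg at hle
    have : h α d' ≤ h α c' := h_le_h hα (le_trans hc'mem.2 hv) hle
    rw [hc', hd'] at this
    exact absurd hcd (not_lt.2 this)
  have himg : lorenzMap ((2:ℝ) ^ α) α '' Ioo c' d' = Ioo c₀ d₀ := by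
    rw [image_Ioo_left hα (le_trans hd'mem.2 hv) hcd', hc', hd']
  refine ⟨n + 1, Nat.le_add_left 1 n, c', d', hcd',
    Ioo_subset_Ioo hc'mem.1 hd'mem.2, ?_, ?_⟩
  · intro k hk
    cases k with
    | zero =>
      simp only [Function.iterate_zero, Set.image_id]
      rintro ⟨-, h0⟩
      exact absurd (le_trans hd'mem.2 hv) (not_le.2 h0)
    | succ k =>
      rw [Function.iterate_succ, Set.image_comp, himg]
      exact havoid k (Nat.lt_of_succ_lt_succ hk)
  · rw [Function.iterate_succ, Set.image_comp, himg]
    exact him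

section Main

variable (hα' : 1 / Real.sqrt 2 < α) (hα1 : α < 1)
include hα' hα1

omit hα1 in
lemma half_lt_alpha : 1/2 < α := by
  have hs : Real.sqrt 2 < 2 := by
    nlinarith [Real.sq_sqrt (by norm_num : (0:ℝ) ≤ 2), Real.sqrt_nonneg 2]
  have hs0 : 0 < Real.sqrt 2 := Real.sqrt_pos.2 (by norm_num)
  have : (1:ℝ)/2 < 1 / Real.sqrt 2 := by
    rw [div_lt_div_iff₀ (by norm_num) hs0]
    linarith
  linarith

omit hα1 in
lemma alpha_pos : 0 < α := by have := half_lt_alpha hα'; linarith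

omit hα1 in
lemma one_lt_lam : 1 < 2 * α := by have := half_lt_alpha hα'; linarith

/-- Anchored intervals `(-1/2, t)`, `t ≤ 0`, eventually reach. -/
lemma anchored_left : ∀ n : ℕ, ∀ t : ℝ, -(1/2) < t → t ≤ 0 →
    1 < (2*α)^n * (t + 1/2) → Reach α (-(1/2)) t := by
  have hα : 0 < α := alpha_pos hα'
  have hlam : 1 < 2 * α := one_lt_lam hα'
  intro n
  induction n with
  | zero => intro t ht ht0 habs; rw [pow_zero, one_mul] at habs; linarith
  | succ n ih =>
    intro t ht ht0 hpot
    apply pull_left hα ht0 ht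
    rw [h_neg_half]
    set t' := h α t with ht'def
    have hexp : 2 * α * (t + 1/2) ≤ t' + 1/2 := by
      have := expand_left hα hα1 (le_refl (-(1/2))) ht ht0
      rw [h_neg_half] at this
      linarith
    have ht'l : -(1/2) < t' := by
      have := h_lt_h hα ht0 ht
      rw [h_neg_half] at this
      exact this
    by_cases hpos : 0 < t'
    · obtain ⟨x₀, hx₀, hg⟩ := exists_x0 hα
      exact reach_neg hα hpos hx₀ hg (by linarith [hx₀.2])
    · push_neg at hpos
      apply ih t' ht'l hpos
      have hp : (0:ℝ) < (2*α)^n := pow_pos (by linarith) n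
      calc (1:ℝ) < (2*α)^(n+1) * (t + 1/2) := hpot
        _ = (2*α)^n * (2*α*(t + 1/2)) := by ring
        _ ≤ (2*α)^n * (t' + 1/2) := mul_le_mul_of_nonneg_left hexp hp.le

/-- Anchored intervals `(s, 1/2)`, `s ≥ 0`, eventually reach. -/
lemma anchored_right : ∀ n : ℕ, ∀ s : ℝ, 0 ≤ s → s < 1/2 →
    1 < (2*α)^n * (1/2 - s) → Reach α s (1/2) := by
  have hα : 0 < α := alpha_pos hα'
  have hlam : 1 < 2 * α := one_lt_lam hα'
  intro n
  induction n with
  | zero => intro s hs hs1 habs; rw [pow_zero, one_mul] at habs; linarith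
  | succ n ih =>
    intro s hs hs1 hpot
    apply pull_right hα hs hs1
    rw [g_half]
    set s' := g α s with hs'def
    have hexp : 2 * α * (1/2 - s) ≤ 1/2 - s' := by
      have := expand_right hα hα1 hs hs1 le_rfl
      rw [g_half] at this
      linarith
    have hs'u : s' < 1/2 := by
      have := g_lt_g hα hs hs1
      rw [g_half] at this
      exact this
    by_cases hneg : s' < 0
    · obtain ⟨x₀, hx₀, hg⟩ := exists_x0 hα
      exact reach_pos hα hneg hx₀ hg (by linarith [hx₀.2])
    · push_neg at hneg
      apply ih s' hneg hs'u
      have hp : (0:ℝ) < (2*α)^n := pow_pos (by linarith) n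
      calc (1:ℝ) < (2*α)^(n+1) * (1/2 - s) := hpot
        _ = (2*α)^n * (2*α*(1/2 - s)) := by ring
        _ ≤ (2*α)^n * (1/2 - s') := mul_le_mul_of_nonneg_left hexp hp.le

/-- Main induction: any interval in `[-1/2,1/2]` of positive length reaches. -/
lemma main_reach : ∀ n : ℕ, ∀ u v : ℝ, -(1/2) ≤ u → u < v → v ≤ 1/2 →
    1 < (2*α)^n * (v - u) → Reach α u v := by
  have hα : 0 < α := alpha_pos hα'
  have hlam : 1 < 2 * α := one_lt_lam hα'
  intro n
  induction n with
  | zero => intro u v hu huv hv habs; rw [pow_zero, one_mul] at habs; linarith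
  | succ n ih =>
    intro u v hu huv hv hpot
    have hp : (0:ℝ) < (2*α)^n := pow_pos (by linarith) n
    rcases le_or_gt 0 u with hu0 | hu0
    · -- interval in the right branch
      apply pull_right hα hu0 huv
      have hexp : 2 * α * (v - u) ≤ g α v - g α u := expand_right hα hα1 hu0 huv hv
      apply ih (g α u) (g α v) ?_ ?_ ?_ ?_
      · rw [← g_zero hα]; exact g_le_g hα le_rfl hu0
      · exact g_lt_g hα hu0 huv
      · rw [← g_half (α := α)]; exact g_le_g hα (le_trans hu0 huv.le) hv
      · calc (1:ℝ) < (2*α)^(n+1) * (v - u) := hpot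
          _ = (2*α)^n * (2*α*(v - u)) := by ring
          _ ≤ (2*α)^n * (g α v - g α u) := mul_le_mul_of_nonneg_left hexp hp.le
    · rcases le_or_gt v 0 with hv0 | hv0
      · -- interval in the left branch
        apply pull_left hα hv0 huv
        have hexp : 2 * α * (v - u) ≤ h α v - h α u := expand_left hα hα1 hu huv hv0
        apply ih (h α u) (h α v) ?_ ?_ ?_ ?_
        · rw [← h_neg_half (α := α)]; exact h_le_h hα (le_trans huv.le hv0) hu
        · exact h_lt_h hα hv0 huv
        · rw [← h_zero hα]; exact h_le_h hα le_rfl hv0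
        · calc (1:ℝ) < (2*α)^(n+1) * (v - u) := hpot
            _ = (2*α)^n * (2*α*(v - u)) := by ring
            _ ≤ (2*α)^n * (h α v - h α u) := mul_le_mul_of_nonneg_left hexp hp.le
      · -- 0 ∈ (u, v)
        obtain ⟨x₀, hx₀, hg⟩ := exists_x0 hα
        rcases le_or_gt x₀ v with hxv | hxv
        · exact reach_pos hα hu0 hx₀ hg hxv
        · rcases le_or_gt u (-x₀) with hxu | hxu
          · exact reach_neg hα hv0 hx₀ hg hxu
          · -- small interval around 0 : pass to the right half (0, v)
            apply reach_mono hu0.le (le_refl v)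
            apply pull_right hα le_rfl hv0
            rw [g_zero hα]
            set w := g α v with hwdef
            have hw0 : w < 0 := by
              have := g_lt_g hα hv0.le hxv
              rw [hg] at this
              exact this
            have hwl : -(1/2) < w := by
              have := g_lt_g hα le_rfl hv0
              rw [g_zero hα] at this
              exact this
            have hwpos : 0 < w + 1/2 := by linarith
            obtain ⟨m, hm⟩ := pow_unbounded_of_one_lt ((w + 1/2)⁻¹) hlam
            apply anchored_left hα' hα1 m w hwl hw0.le
            have := mul_lt_mul_of_pos_right hm hwpos
            rw [inv_mul_cancel₀ hwpos.ne'] at this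
            exact this

end Main

end LorenzAux

/-- for `α ∈ (1/√2, 1)` the full-branch symmetric Lorenz map
with parameter `a = 2^α` is locally eventually onto: every nondegenerate open
subinterval of `(−1/2,1/2)` contains an open subinterval whose iterates avoid
the singularity `0` up to some time `n ≥ 1` at which it is mapped exactly
onto `(0,1/2)` or `(−1/2,0)`. -/
theorem lorenzMap_locally_eventually_onto
    (α : ℝ) (hα0 : 1 / Real.sqrt 2 < α) (hα1 : α < 1) :
    ∀ c d : ℝ, c < d → Set.Ioo c d ⊆ Set.Ioo (-(1 / 2) : ℝ) (1 / 2) →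
      ∃ n : ℕ, 1 ≤ n ∧ ∃ c₀ d₀ : ℝ, c₀ < d₀ ∧
        Set.Ioo c₀ d₀ ⊆ Set.Ioo c d ∧
        (∀ k < n, (0 : ℝ) ∉ (lorenzMap ((2 : ℝ) ^ α) α)^[k] '' Set.Ioo c₀ d₀) ∧
        ((lorenzMap ((2 : ℝ) ^ α) α)^[n] '' Set.Ioo c₀ d₀
            = Set.Ioo (0 : ℝ) (1 / 2) ∨
         (lorenzMap ((2 : ℝ) ^ α) α)^[n] '' Set.Ioo c₀ d₀
            = Set.Ioo (-(1 / 2) : ℝ) 0) := by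
  intro c d hcd hsub
  have hlam : 1 < 2 * α := LorenzAux.one_lt_lam hα0
  have hb : -(1/2) ≤ c ∧ d ≤ 1/2 := (Set.Ioo_subset_Ioo_iff hcd).1 hsub
  have hdc : 0 < d - c := by linarith
  obtain ⟨n, hn⟩ := pow_unbounded_of_one_lt ((d - c)⁻¹) hlam
  have h1 : 1 < (2*α)^n * (d - c) := by
    have := mul_lt_mul_of_pos_right hn hdc
    rwa [inv_mul_cancel₀ hdc.ne'] at this
  exact LorenzAux.main_reach hα0 hα1 n c d hb.1 hcd hb.2 h1
end

section
/- Let S be a compact metric space, P : S → S Borel measurable, T a metric space, π : S → T a Borel surjection, f : T → T Borel with f ∘ π = π ∘ P, and assume uniform fiber contraction: sup_{t ∈ T} diam(Pⁿ(π^{−1}{t})) → 0 as n → ∞. Let ν be an f-invariant Borel probability measure on T, and let (ω_t)_{t∈T} and (ω′_t)_{t∈T} be two Markov kernels from T to S such that ω_t and ω′_t are Borel probability measures concentrated on the fiber π^{−1}{t} for every t. Then for every continuous ψ : S → ℝ, both limits lim_{n→∞} ∫_T ∫_S ψ(Pⁿ(w)) dω_t(w) dν(t) and lim_{n→∞} ∫_T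 ∫_S ψ(Pⁿ(w)) dω′_t(w) dν(t) exist and are equal; i.e. the limit is independent of the chosen family of fiber measures. -/
open MeasureTheory Filter Topology
open scoped ENNReal

lemma integral_dist_le_of_concentrated {S : Type*} [MeasurableSpace S]
    (g : S → ℝ) (hg : Measurable g) (C : ℝ) (hgb : ∀ x, ‖g x‖ ≤ C)
    (A : Set S) (hA : MeasurableSet A) (x₀ : S) (hx₀ : x₀ ∈ A)
    (ε : ℝ) (hε : ∀ x ∈ A, ∀ y ∈ A, dist (g x) (g y) ≤ ε)
    (μ : Measure S) [IsProbabilityMeasure μ] (h1 : μ A = 1) :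
    |(∫ x, g x ∂μ) - g x₀| ≤ ε := by
  have hgint : Integrable g μ :=
    (integrable_const C).mono' hg.aestronglyMeasurable (ae_of_all _ hgb)
  have hAc : μ Aᶜ = 0 := by
    have := measure_compl hA (measure_ne_top μ A)
    simp [h1] at this; simpa using this
  have hae : ∀ᵐ x ∂μ, x ∈ A := by
    rw [ae_iff]; exact hAc
  have : (∫ x, g x ∂μ) - g x₀ = ∫ x, (g x - g x₀) ∂μ := by
    rw [integral_sub hgint (integrable_const _), integral_const]
    simp
  rw [this]
  have : ‖∫ x, (g x - g x₀) ∂μ‖ ≤ ε * (μ Set.univ).toReal := by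
    apply norm_integral_le_of_norm_le_const
    filter_upwards [hae] with x hx
    simpa [Real.norm_eq_abs, ← Real.dist_eq] using hε x hx x₀ hx₀
  simpa [Real.norm_eq_abs] using this

/-- independence of the limit from the disintegration. In the
setting of a uniformly contracting fibration `π : S → T` over an
`f`-invariant probability `ν`, for any two Markov kernels `(ω_t)`, `(ω′_t)`
of probability measures concentrated on the fibers, the limits
`lim_n ∫∫ ψ(Pⁿ(w)) dω_t(w) dν(t)` and `lim_n ∫∫ ψ(Pⁿ(w)) dω′_t(w) dν(t)`
exist and coincide, for every continuous `ψ : S → ℝ`. -/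
theorem limit_independent_of_fiber_measures
    {S T : Type*} [MetricSpace S] [CompactSpace S]
    [MeasurableSpace S] [BorelSpace S]
    [MetricSpace T] [MeasurableSpace T] [BorelSpace T]
    (P : S → S) (hP : Measurable P)
    (π : S → T) (hπ : Measurable π) (hπsurj : Function.Surjective π)
    (f : T → T) (hf : Measurable f) (hcomm : f ∘ π = π ∘ P)
    (hcontr : Tendsto (fun n : ℕ => ⨆ t : T, EMetric.diam (P^[n] '' (π ⁻¹' {t})))
      atTop (𝓝 0))
    (ν : Measure T) [IsProbabilityMeasure ν] (hinv : Measure.map f ν = ν)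
    (ω ω' : T → Measure S) (hω : Measurable ω) (hω' : Measurable ω')
    (hωprob : ∀ t, IsProbabilityMeasure (ω t))
    (hω'prob : ∀ t, IsProbabilityMeasure (ω' t))
    (hωfib : ∀ t, ω t (π ⁻¹' {t}) = 1)
    (hω'fib : ∀ t, ω' t (π ⁻¹' {t}) = 1) :
    ∀ ψ : C(S, ℝ), ∃ c : ℝ,
      Tendsto (fun n : ℕ => ∫ t, ∫ w, ψ (P^[n] w) ∂(ω t) ∂ν) atTop (𝓝 c) ∧
      Tendsto (fun n : ℕ => ∫ t, ∫ w, ψ (P^[n] w) ∂(ω' t) ∂ν) atTop (𝓝 c) := by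
  intro ψ
  -- basic data about ψ ∘ P^[n]
  set C : ℝ := ‖ψ‖ with hC
  set g : ℕ → S → ℝ := fun n w => ψ (P^[n] w) with hg
  have hgmeas : ∀ n, Measurable (g n) := fun n =>
    ψ.continuous.measurable.comp (hP.iterate n)
  have hgb : ∀ n x, ‖g n x‖ ≤ C := fun n x => ψ.norm_coe_le_norm (P^[n] x)
  -- semiconjugacy
  have hsemi : ∀ (k : ℕ) (x : S), π (P^[k] x) = f^[k] (π x) := by
    have h : Function.Semiconj π P f := fun x => (congrFun hcomm x).symm
    exact fun k x => (h.iterate_right k) x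
  -- iterated invariance
  have hmapiter : ∀ k : ℕ, Measure.map f^[k] ν = ν := by
    intro k
    induction k with
    | zero => simp [Measure.map_id]
    | succ k ih =>
      rw [Function.iterate_succ, ← Measure.map_map (hf.iterate k) hf, hinv, ih]
  -- the inner integral functions
  set F : ℕ → T → ℝ := fun n t => ∫ w, g n w ∂(ω t) with hF
  set F' : ℕ → T → ℝ := fun n t => ∫ w, g n w ∂(ω' t) with hF'
  -- measurability of the inner integrals via kernels
  have hFmeas : ∀ n, StronglyMeasurable (F n) := by
    intro n
    let κ : ProbabilityTheory.Kernel T S := ⟨ω, hω⟩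
    haveI : ProbabilityTheory.IsMarkovKernel κ := ⟨hωprob⟩
    have : StronglyMeasurable fun t => ∫ w, g n w ∂(κ t) :=
      StronglyMeasurable.integral_kernel_prod_right
        (f := fun _ w => g n w)
        ((hgmeas n).stronglyMeasurable.comp_measurable measurable_snd)
    exact this
  have hF'meas : ∀ n, StronglyMeasurable (F' n) := by
    intro n
    let κ : ProbabilityTheory.Kernel T S := ⟨ω', hω'⟩
    haveI : ProbabilityTheory.IsMarkovKernel κ := ⟨hω'prob⟩
    have : StronglyMeasurable fun t => ∫ w, g n w ∂(κ t) :=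
      StronglyMeasurable.integral_kernel_prod_right
        (f := fun _ w => g n w)
        ((hgmeas n).stronglyMeasurable.comp_measurable measurable_snd)
    exact this
  have hFbd : ∀ n t, ‖F n t‖ ≤ C := by
    intro n t
    haveI := hωprob t
    have : ‖∫ w, g n w ∂(ω t)‖ ≤ C * ((ω t) Set.univ).toReal :=
      norm_integral_le_of_norm_le_const (ae_of_all _ fun w => hgb n w)
    simpa using this
  have hF'bd : ∀ n t, ‖F' n t‖ ≤ C := by
    intro n t
    haveI := hω'prob t
    have : ‖∫ w, g n w ∂(ω' t)‖ ≤ C * ((ω' t) Set.univ).toReal :=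
      norm_integral_le_of_norm_le_const (ae_of_all _ fun w => hgb n w)
    simpa using this
  have hFint : ∀ n, Integrable (F n) ν := fun n =>
    (integrable_const C).mono' (hFmeas n).aestronglyMeasurable
      (ae_of_all _ fun t => hFbd n t)
  have hF'int : ∀ n, Integrable (F' n) ν := fun n =>
    (integrable_const C).mono' (hF'meas n).aestronglyMeasurable
      (ae_of_all _ fun t => hF'bd n t)
  have hFcompint : ∀ n k, Integrable (fun t => F n (f^[k] t)) ν := by
    intro n k
    refine (integrable_const C).mono'
      ((hFmeas n).comp_measurable (hf.iterate k)).aestronglyMeasurable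
      (ae_of_all _ fun t => hFbd n _)
  -- invariance of the outer integral
  have hinvint : ∀ n k, ∫ t, F n (f^[k] t) ∂ν = ∫ t, F n t ∂ν := by
    intro n k
    conv_rhs => rw [← hmapiter k]
    rw [integral_map (hf.iterate k).aemeasurable
      (by rw [hmapiter k]; exact (hFmeas n).aestronglyMeasurable)]
  -- the key uniform estimate
  have key : ∀ ε : ℝ, 0 < ε → ∃ N : ℕ, ∀ n ≥ N, ∀ t : T, ∀ μ₁ μ₂ : Measure S,
      IsProbabilityMeasure μ₁ → IsProbabilityMeasure μ₂ →
      μ₁ (π ⁻¹' {t}) = 1 → μ₂ (π ⁻¹' {t}) = 1 →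
      |(∫ x, g n x ∂μ₁) - ∫ x, g n x ∂μ₂| ≤ 2 * ε := by
    intro ε hε
    obtain ⟨δ, hδ, hδψ⟩ := Metric.uniformContinuous_iff.mp
      (CompactSpace.uniformContinuous_of_continuous ψ.continuous) ε hε
    have hev : ∀ᶠ n in atTop,
        (⨆ t : T, EMetric.diam (P^[n] '' (π ⁻¹' {t}))) < ENNReal.ofReal δ :=
      hcontr.eventually (Iio_mem_nhds (by simp [hδ]))
    obtain ⟨N, hN⟩ := eventually_atTop.mp hev
    refine ⟨N, fun n hn t μ₁ μ₂ hp₁ hp₂ h₁ h₂ => ?_⟩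
    haveI := hp₁; haveI := hp₂
    obtain ⟨x₀, hx₀⟩ := hπsurj t
    have hx₀A : x₀ ∈ π ⁻¹' {t} := by simp [hx₀]
    have hA : MeasurableSet (π ⁻¹' {t}) := hπ (measurableSet_singleton t)
    have hvar : ∀ x ∈ π ⁻¹' {t}, ∀ y ∈ π ⁻¹' {t}, dist (g n x) (g n y) ≤ ε := by
      intro x hx y hy
      have hd : edist (P^[n] x) (P^[n] y) < ENNReal.ofReal δ := by
        calc edist (P^[n] x) (P^[n] y)
            ≤ EMetric.diam (P^[n] '' (π ⁻¹' {t})) :=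
              EMetric.edist_le_diam_of_mem (Set.mem_image_of_mem _ hx)
                (Set.mem_image_of_mem _ hy)
          _ ≤ ⨆ t : T, EMetric.diam (P^[n] '' (π ⁻¹' {t})) :=
              le_iSup (fun t : T => EMetric.diam (P^[n] '' (π ⁻¹' {t}))) t
          _ < ENNReal.ofReal δ := hN n hn
      have : dist (P^[n] x) (P^[n] y) < δ := by
        rwa [edist_lt_ofReal] at hd
      exact (hδψ this).le
    have e₁ := integral_dist_le_of_concentrated (g n) (hgmeas n) C (hgb n)
      (π ⁻¹' {t}) hA x₀ hx₀A ε hvar μ₁ h₁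
    have e₂ := integral_dist_le_of_concentrated (g n) (hgmeas n) C (hgb n)
      (π ⁻¹' {t}) hA x₀ hx₀A ε hvar μ₂ h₂
    calc |(∫ x, g n x ∂μ₁) - ∫ x, g n x ∂μ₂|
        ≤ |(∫ x, g n x ∂μ₁) - g n x₀| + |(∫ x, g n x ∂μ₂) - g n x₀| := by
          rw [abs_sub_comm (∫ x, g n x ∂μ₂) _]; exact abs_sub_le _ _ _
      _ ≤ 2 * ε := by linarith
  -- concentration of the pushed-forward fiber measure
  have hpush : ∀ (k : ℕ) (t : T),
      Measure.map P^[k] (ω t) (π ⁻¹' {f^[k] t}) = 1 := by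
    intro k t
    haveI := hωprob t
    rw [Measure.map_apply (hP.iterate k) (hπ (measurableSet_singleton _))]
    have hsub : π ⁻¹' {t} ⊆ P^[k] ⁻¹' (π ⁻¹' {f^[k] t}) := by
      intro w hw
      simp only [Set.mem_preimage, Set.mem_singleton_iff] at hw ⊢
      rw [hsemi k w, hw]
    refine le_antisymm prob_le_one ?_
    calc (1 : ℝ≥0∞) = ω t (π ⁻¹' {t}) := (hωfib t).symm
      _ ≤ _ := measure_mono hsub
  -- pushforward identity: F (n+k) t = ∫ g n d(map P^[k] (ω t))
  have hpushint : ∀ (n k : ℕ) (t : T),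
      (∫ x, g n x ∂(Measure.map P^[k] (ω t))) = F (n + k) t := by
    intro n k t
    rw [integral_map (hP.iterate k).aemeasurable (hgmeas n).aestronglyMeasurable]
    simp only [hF, hg]
    congr 1; funext w
    rw [Function.iterate_add_apply]
  -- abbreviations
  set a : ℕ → ℝ := fun n => ∫ t, F n t ∂ν with ha
  set b : ℕ → ℝ := fun n => ∫ t, F' n t ∂ν with hb
  -- Cauchy-type estimate for a
  have hstep : ∀ ε : ℝ, 0 < ε → ∃ N : ℕ, ∀ n ≥ N, ∀ k : ℕ,
      |a (n + k) - a n| ≤ 2 * ε := by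
    intro ε hε
    obtain ⟨N, hN⟩ := key ε hε
    refine ⟨N, fun n hn k => ?_⟩
    have h1 : a n = ∫ t, F n (f^[k] t) ∂ν := (hinvint n k).symm
    have h2 : a (n + k) - a n = ∫ t, (F (n + k) t - F n (f^[k] t)) ∂ν := by
      rw [h1]; exact (integral_sub (hFint (n + k)) (hFcompint n k)).symm
    rw [h2]
    have hbound : ∀ t, ‖F (n + k) t - F n (f^[k] t)‖ ≤ 2 * ε := by
      intro t
      haveI := hωprob t
      haveI : IsProbabilityMeasure (Measure.map P^[k] (ω t)) :=
        Measure.isProbabilityMeasure_map (hP.iterate k).aemeasurable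
      have := hN n hn (f^[k] t) (Measure.map P^[k] (ω t)) (ω (f^[k] t))
        inferInstance (hωprob _) (hpush k t) (hωfib _)
      rw [hpushint n k t] at this
      simpa [Real.norm_eq_abs] using this
    have : ‖∫ t, (F (n + k) t - F n (f^[k] t)) ∂ν‖ ≤ 2 * ε * (ν Set.univ).toReal :=
      norm_integral_le_of_norm_le_const (ae_of_all _ hbound)
    simpa [Real.norm_eq_abs] using this
  -- a is Cauchy
  have hca : CauchySeq a := by
    rw [Metric.cauchySeq_iff']
    intro ε hε
    obtain ⟨N, hN⟩ := hstep (ε / 3) (by linarith)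
    refine ⟨N, fun n hn => ?_⟩
    have := hN N le_rfl (n - N)
    rw [Nat.add_sub_cancel' hn] at this
    rw [Real.dist_eq]
    linarith
  obtain ⟨c, hc⟩ := cauchySeq_tendsto_of_complete hca
  refine ⟨c, hc, ?_⟩
  -- b n - a n → 0
  have hdiff : Tendsto (fun n => b n - a n) atTop (𝓝 0) := by
    rw [Metric.tendsto_atTop]
    intro ε hε
    obtain ⟨N, hN⟩ := key (ε / 3) (by linarith)
    refine ⟨N, fun n hn => ?_⟩
    have h2 : b n - a n = ∫ t, (F' n t - F n t) ∂ν :=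
      (integral_sub (hF'int n) (hFint n)).symm
    have hbound : ∀ t, ‖F' n t - F n t‖ ≤ 2 * (ε / 3) := by
      intro t
      have := hN n hn t (ω' t) (ω t) (hω'prob t) (hωprob t) (hω'fib t) (hωfib t)
      simpa [Real.norm_eq_abs] using this
    have : ‖∫ t, (F' n t - F n t) ∂ν‖ ≤ 2 * (ε / 3) * (ν Set.univ).toReal :=
      norm_integral_le_of_norm_le_const (ae_of_all _ hbound)
    rw [Real.dist_eq, sub_zero, h2]
    have h3 : |∫ t, (F' n t - F n t) ∂ν| ≤ 2 * (ε / 3) := by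
      simpa [Real.norm_eq_abs] using this
    linarith
  have : Tendsto (fun n => a n + (b n - a n)) atTop (𝓝 (c + 0)) := hc.add hdiff
  simpa using this
end
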